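/- For every m ∈ ℝ, the sublevel set of ρ satisfies {X ∈ 𝒳 : ρ(X) ≤ m} = cl_{−U}(𝒜 + ker π) − m·U = cl_{−U}(𝒜 + ker π) + {t·U : t ≥ 0} − m·U. -/

import Mathlib

open Pointwise

/-- The risk measure associated with acceptance set `A`, eligible payoffs `M`
and pricing functional `π` (infimum in the extended reals, `sInf ∅ = +∞`). -/
noncomputable def rho {X : Type*} [AddCommGroup X] [Module ℝ X]
    (M : Submodule ℝ X) (π : M →ₗ[ℝ] ℝ) (A : Set X) (x : X) : EReal :=
  sInf {r : EReal | ∃ Z : M, x + (Z : X) ∈ A ∧ ((π Z : ℝ) : EReal) = r}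

/-- The kernel of the pricing functional `π`, viewed as a subset of `X`. -/
def kerSet {X : Type*} [AddCommGroup X] [Module ℝ X]
    (M : Submodule ℝ X) (π : M →ₗ[ℝ] ℝ) : Set X :=
  Subtype.val '' {Z : M | π Z = 0}

/-- `K`-directional closure of `S`. -/
def clK {X : Type*} [AddCommGroup X] [Module ℝ X] (K : X) (S : Set X) : Set X :=
  {x : X | ∀ l : ℝ, 0 < l → ∃ t : ℝ, 0 ≤ t ∧ t < l ∧ x - t • K ∈ S}

/-- `K`-directional interior of `S`. -/
def intK {X : Type*} [AddCommGroup X] [Module ℝ X] (K : X) (S : Set X) : Set X :=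
  {x : X | ∃ l : ℝ, 0 < l ∧ ∀ t : ℝ, 0 ≤ t → t ≤ l → x + t • K ∈ S}

/-- `K`-directional boundary of `S`. -/
def bdK {X : Type*} [AddCommGroup X] [Module ℝ X] (K : X) (S : Set X) : Set X :=
  clK K S \ intK K S

/-- Recession cone of `S`. -/
def recCone {X : Type*} [AddCommGroup X] [Module ℝ X] (S : Set X) : Set X :=
  {v : X | ∀ y ∈ S, ∀ l : ℝ, 0 ≤ l → y + l • v ∈ S}

theorem stmt_9 {X : Type*} [AddCommGroup X] [Module ℝ X]
(Xpos : Set X)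
    (hXpos0 : (0 : X) ∈ Xpos)
    (hXposSmul : ∀ t : ℝ, 0 ≤ t → ∀ x ∈ Xpos, t • x ∈ Xpos)
    (hXposConv : Convex ℝ Xpos)
    (hXposPointed : ∀ x ∈ Xpos, -x ∈ Xpos → x = 0)
    (M : Submodule ℝ X) (π : M →ₗ[ℝ] ℝ)
    (U : M) (hUpos : (U : X) ∈ Xpos) (hU1 : π U = 1)
    (A : Set X) (hA0 : (0 : X) ∈ A) (hAne : A ≠ Set.univ) (hAmono : A + Xpos ⊆ A) :
    ∀ m : ℝ,
      ({x : X | rho M π A x ≤ (m : EReal)}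
          = (fun y => y - m • (U : X)) '' clK (-(U : X)) (A + kerSet M π)) ∧
      ((fun y => y - m • (U : X)) '' clK (-(U : X)) (A + kerSet M π)
          = (fun y => y - m • (U : X)) ''
              (clK (-(U : X)) (A + kerSet M π) + {x : X | ∃ t : ℝ, 0 ≤ t ∧ x = t • (U : X)})) := by
  intro m
  set B := A + kerSet M π with hB
  -- B is stable under adding s•U for s ≥ 0
  have hBadd : ∀ y ∈ B, ∀ s : ℝ, 0 ≤ s → y + s • (U : X) ∈ B := by
    rintro y hy s hs
    obtain ⟨a, ha, k, hk, rfl⟩ := hy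
    refine ⟨a + s • (U : X), hAmono ⟨a, ha, s • (U : X), hXposSmul s hs _ hUpos, rfl⟩, k, hk, by module⟩
  -- key characterization
  have key : ∀ x : X, rho M π A x ≤ (m : EReal) ↔ x + m • (U : X) ∈ clK (-(U : X)) B := by
    intro x
    constructor
    · intro h l hl
      have hlt : rho M π A x < ((m + l : ℝ) : EReal) := by
        refine lt_of_le_of_lt h ?_
        exact_mod_cast (by linarith : m < m + l)
      rw [rho, sInf_lt_iff] at hlt
      obtain ⟨r, ⟨Z, hZA, hZr⟩, hr⟩ := hlt
      rw [← hZr] at hr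
      have hp : π Z < m + l := by exact_mod_cast hr
      set p := π Z with hpdef
      refine ⟨max (p - m) 0, le_max_right _ _, ?_, ?_⟩
      · exact max_lt (by linarith) hl
      · set t := max (p - m) 0 with ht
        have htp : p ≤ m + t := by
          have := le_max_left (p - m) 0
          linarith [this.trans_eq ht.symm]
        have hk : ((p • U - Z : M) : X) ∈ kerSet M π := by
          refine ⟨p • U - Z, ?_, rfl⟩
          simp [hU1, hpdef]
        refine Set.mem_of_eq_of_mem ?_
          (Set.add_mem_add (hAmono ⟨x + (Z : X), hZA,
            (m + t - p) • (U : X), hXposSmul _ (by linarith) _ hUpos, rfl⟩) hk)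
        push_cast
        module
    · intro h
      refine le_of_forall_gt_imp_ge_of_dense fun b hb => ?_
      induction b with
      | bot => exact absurd hb (by simp)
      | top =>
        obtain ⟨t, ht0, htl, hmem⟩ := h 1 one_pos
        exact le_top
      | coe r =>
        have hmr : m < r := by exact_mod_cast hb
        obtain ⟨t, ht0, htl, hmem⟩ := h (r - m) (by linarith)
        obtain ⟨a, ha, k, hk, hsum⟩ := hmem
        obtain ⟨K, hK0, rfl⟩ := hk
        have hxZ : x + (((m + t) • U - K : M) : X) ∈ A := by
          have ha' : a = (x + m • (U : X) - t • (-(U : X))) - (K : X) := by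
            rw [← hsum]; module
          refine Set.mem_of_eq_of_mem ?_ ha
          rw [ha']; push_cast; module
        have : ((m + t : ℝ) : EReal) ∈
            {r : EReal | ∃ Z : M, x + (Z : X) ∈ A ∧ ((π Z : ℝ) : EReal) = r} := by
          refine ⟨(m + t) • U - K, hxZ, ?_⟩
          have hK0' : π K = 0 := hK0
          simp [hU1, hK0']
        refine (sInf_le this).trans ?_
        exact_mod_cast (by linarith : m + t ≤ r)
  constructor
  · ext x
    simp only [Set.mem_setOf_eq, Set.mem_image]
    rw [key x]
    constructor
    · intro h; exact ⟨x + m • (U : X), h, by abel⟩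
    · rintro ⟨y, hy, rfl⟩
      convert hy using 2; abel
  · have hCC : clK (-(U : X)) B
        = clK (-(U : X)) B + {x : X | ∃ t : ℝ, 0 ≤ t ∧ x = t • (U : X)} := by
      ext y
      constructor
      · intro hy
        exact ⟨y, hy, 0, ⟨0, le_refl _, by simp⟩, by simp⟩
      · rintro ⟨c, hc, v, ⟨t, ht0, rfl⟩, rfl⟩
        intro l hl
        obtain ⟨s, hs0, hsl, hmem⟩ := hc l hl
        refine ⟨s, hs0, hsl, ?_⟩
        refine Set.mem_of_eq_of_mem ?_ (hBadd _ hmem t ht0)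
        module
    rw [← hCC]
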